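/- If G is a subgroup of an abelian group H such that Soc(G) is dense in Soc(H) (closures taken in a given group topology on H), and K is a divisible subgroup of G, then Soc(G/K) is dense in Soc(H/K) with respect to the quotient topology. -/

import Mathlib

/-- The socle of an abelian group restricted to a subset `S`: the elements of `S`
of squarefree finite order (this set of elements of `S` generates, and in fact
equals, the underlying set of `Soc(S) = ⊕ₚ S[p]` when `S` is a subgroup). -/
def socSet {H : Type*} [AddCommGroup H] (S : Set H) : Set H :=
  {x ∈ S | ∃ n : ℕ, 0 < n ∧ Squarefree n ∧ n • x = 0}

/-- Let `H` be an abelian topological group, `G ≤ H` a subgroup with `Soc(G)` dense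
in `Soc(H)`, and `K ≤ G` a divisible subgroup. Then `Soc(G/K)` is dense in
`Soc(H/K)` in the quotient topology on `H ⧸ K`. -/
theorem stmt_11 {H : Type*} [AddCommGroup H] [TopologicalSpace H]
    [IsTopologicalAddGroup H] (G K : AddSubgroup H) (hKG : K ≤ G)
    (hdiv : ∀ k ∈ K, ∀ n : ℕ, 0 < n → ∃ f ∈ K, n • f = k)
    (hdense : socSet (Set.univ : Set H) ⊆ closure (socSet (G : Set H))) :
    socSet (Set.univ : Set (H ⧸ K)) ⊆
      closure (socSet ((G.map (QuotientAddGroup.mk' K) : AddSubgroup (H ⧸ K)) :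
        Set (H ⧸ K))) := by
  rintro x ⟨-, n, hn, hsq, hnx⟩
  obtain ⟨y, rfl⟩ := QuotientAddGroup.mk_surjective x
  have hny : n • y ∈ K := by
    rw [← QuotientAddGroup.eq_zero_iff]
    simpa using hnx
  obtain ⟨f, hfK, hf⟩ := hdiv _ hny n hn
  have hz : (y - f) ∈ socSet (Set.univ : Set H) :=
    ⟨trivial, n, hn, hsq, by rw [smul_sub, hf, sub_self]⟩
  have hz' := hdense hz
  have hxz : (QuotientAddGroup.mk y : H ⧸ K) = QuotientAddGroup.mk (y - f) := by
    rw [QuotientAddGroup.eq]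
    have h : -y + (y - f) = -f := by abel
    rw [h]
    exact K.neg_mem hfK
  rw [hxz]
  have hcont : Continuous (QuotientAddGroup.mk : H → H ⧸ K) := continuous_quot_mk
  have hmem := (image_closure_subset_closure_image hcont) (Set.mem_image_of_mem _ hz')
  refine closure_mono ?_ hmem
  rintro _ ⟨g, ⟨hgG, m, hm, hmsq, hmg⟩, rfl⟩
  refine ⟨⟨g, hgG, rfl⟩, m, hm, hmsq, ?_⟩
  have : ((m • g : H) : H ⧸ K) = 0 := by rw [hmg]; rfl
  simpa using this
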